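/- Let r and s be coprime integers with 2 ≤ r < s, g = (r−1)(s−1)/2, N the increasing enumeration of the numerical semigroup generated by r and s, and Λ_i = g − N(i−1) + (i−1) for i = 1, …, g. Then for every k with 0 ≤ k < g, the rank of the truncated partition Λ^{[k]} = (Λ_{k+1}, …, Λ_g) equals n_k = #{ℓ ∈ ℕ : N(ℓ) ≤ g−k−1}; that is, n_k is the largest integer ρ such that Λ_{k+ρ} ≥ ρ. -/

import Mathlib

/-- Membership in the numerical semigroup generated by `r` and `s`. -/
def inSg (r s n : ℕ) : Prop := ∃ a b : ℕ, n = a * r + b * s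

/-- The Young diagram row lengths `Λ i = g - N(i-1) + (i-1)` attached to the
Weierstrass gap sequence. -/
def Lam (g : ℕ) (N : ℕ → ℕ) (i : ℕ) : ℕ := g + (i - 1) - N (i - 1)

/-- `nkDef g k N = #{ℓ : N ℓ ≤ g - k - 1}`. -/
noncomputable def nkDef (g k : ℕ) (N : ℕ → ℕ) : ℕ :=
  Set.ncard {ℓ : ℕ | N ℓ ≤ g - k - 1}

open scoped Classical

lemma exists_rep (r s : ℕ) (hco : Nat.Coprime r s) (hs : 0 < s) (z : ℤ) :
    ∃ a b : ℤ, 0 ≤ a ∧ a < s ∧ z = a * r + b * s := by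
  obtain ⟨u, v, huv⟩ := (Nat.isCoprime_iff_coprime.mpr hco)
  have hs' : (0:ℤ) < s := by exact_mod_cast hs
  refine ⟨(z*u) % s, (z*u)/s * r + z * v, Int.emod_nonneg _ hs'.ne',
    Int.emod_lt_of_pos _ hs', ?_⟩
  have h := Int.emod_add_mul_ediv (z*u) s
  linear_combination (-z) * huv - (r:ℤ) * h

lemma rep_nonneg (r s : ℕ) (hco : Nat.Coprime r s) (hs : 0 < s)
    (a b : ℤ) (ha0 : 0 ≤ a) (has : a < s) (n : ℕ) (hn : (n:ℤ) = a * r + b * s) :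
    inSg r s n ↔ 0 ≤ b := by
  have hs' : (0:ℤ) < s := by exact_mod_cast hs
  constructor
  · rintro ⟨a', b', h⟩
    -- reduce a' mod s over ℤ
    set a'' : ℤ := (a' : ℤ) % s with ha''
    have h1 : 0 ≤ a'' := Int.emod_nonneg _ hs'.ne'
    have h2 : a'' < s := Int.emod_lt_of_pos _ hs'
    have hdiv : (a':ℤ) % s + s * ((a':ℤ) / s) = a' := Int.emod_add_mul_ediv _ _
    have hq : 0 ≤ (a':ℤ) / s := Int.ediv_nonneg (by positivity) hs'.le
    set b'' : ℤ := (b' : ℤ) + (a':ℤ)/s * r with hb''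
    have hb''0 : 0 ≤ b'' := by positivity
    have hn2 : (n:ℤ) = a'' * r + b'' * s := by
      have : (n:ℤ) = (a':ℤ) * r + (b':ℤ) * s := by exact_mod_cast h
      rw [this]; linear_combination (r:ℤ) * hdiv.symm
    -- now a = a''
    have hco' : IsCoprime (s:ℤ) (r:ℤ) := (Nat.isCoprime_iff_coprime.mpr hco).symm
    have hdvd : (s:ℤ) ∣ (a - a'') * r := ⟨b'' - b, by linarith [hn ▸ hn2, hn]⟩
    have hdvd2 : (s:ℤ) ∣ (a - a'') := (IsCoprime.dvd_of_dvd_mul_right hco') hdvd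
    obtain ⟨c, hc⟩ := hdvd2
    have hs2 : (1:ℤ) ≤ s := hs'
    have hc0 : c = 0 := by
      by_contra h0
      have : 1 ≤ c ∨ c ≤ -1 := by omega
      rcases this with hcc|hcc
      · nlinarith
      · nlinarith
    have hac : a = a'' := by rw [hc0] at hc; linarith
    have hb : b = b'' := by
      have : b * s = b'' * s := by nlinarith [hn, hn2, hac]
      exact mul_right_cancel₀ hs'.ne' this
    omega
  · intro hb
    refine ⟨a.toNat, b.toNat, ?_⟩
    have : (n:ℤ) = (a.toNat : ℤ) * r + (b.toNat : ℤ) * s := by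
      rw [Int.toNat_of_nonneg ha0, Int.toNat_of_nonneg hb]; exact hn
    exact_mod_cast this

lemma sym_lemma (r s g : ℕ) (hr : 2 ≤ r) (hrs : r < s) (hco : Nat.Coprime r s)
    (hg : 2 * g = (r - 1) * (s - 1)) (m n : ℕ) (hmn : m + n + 1 = 2 * g) :
    (inSg r s m ↔ ¬ inSg r s n) := by
  have hs : 0 < s := by omega
  have hgZ : (m:ℤ) + n + 1 = ((r:ℤ) - 1) * ((s:ℤ) - 1) := by
    have h := congrArg (Nat.cast : ℕ → ℤ) hg
    rw [Nat.cast_mul, Nat.cast_mul, Nat.cast_sub (show 1 ≤ r by omega),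
      Nat.cast_sub (show 1 ≤ s by omega)] at h
    have h2 : (m:ℤ) + n + 1 = 2 * g := by exact_mod_cast hmn
    push_cast at h
    linarith
  obtain ⟨a, b, ha0, has, hab⟩ := exists_rep r s hco hs (m : ℤ)
  have hm := rep_nonneg r s hco hs a b ha0 has m hab
  have hnrep : (n:ℤ) = ((s:ℤ) - 1 - a) * r + (-1 - b) * s := by
    have : (n:ℤ) = ((r:ℤ)-1)*((s:ℤ)-1) - 1 - m := by linarith
    rw [this, hab]; ring
  have hn := rep_nonneg r s hco hs _ _ (by omega) (by omega) n hnrep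
  rw [hm, hn]; omega

lemma count_Ico (r s g : ℕ) (hr : 2 ≤ r) (hrs : r < s) (hco : Nat.Coprime r s)
    (hg : 2 * g = (r - 1) * (s - 1)) (k : ℕ) (hk : k ≤ g) :
    ((Finset.Ico (g-k) (g+k)).filter (fun m => inSg r s m)).card = k := by
  set I := Finset.Ico (g-k) (g+k) with hI
  have hcardI : I.card = 2 * k := by rw [hI, Nat.card_Ico]; omega
  have hsplit := Finset.card_filter_add_card_filter_not
    (s := I) (p := fun m => inSg r s m)
  have hbij : ((I.filter (fun m => inSg r s m))).card
      = ((I.filter (fun m => ¬ inSg r s m))).card := by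
    apply Finset.card_bij (fun m _ => 2*g - 1 - m)
    · intro m hm
      simp only [Finset.mem_filter, Finset.mem_Ico, hI] at hm ⊢
      refine ⟨⟨by omega, by omega⟩, ?_⟩
      have hm2 : m + (2*g-1-m) + 1 = 2*g := by omega
      exact ((sym_lemma r s g hr hrs hco hg m _ hm2).mp hm.2)
    · intro m hm m' hm' h
      simp only [Finset.mem_filter, Finset.mem_Ico, hI] at hm hm'
      omega
    · intro n hn
      simp only [Finset.mem_filter, Finset.mem_Ico, hI] at hn
      refine ⟨2*g-1-n, ?_, by omega⟩
      simp only [Finset.mem_filter, Finset.mem_Ico, hI]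
      refine ⟨⟨by omega, by omega⟩, ?_⟩
      have hm2 : (2*g-1-n) + n + 1 = 2*g := by omega
      exact (sym_lemma r s g hr hrs hco hg _ n hm2).mpr hn.2
  omega

lemma enum_char (r s : ℕ) (N : ℕ → ℕ)
    (hmono : StrictMono N) (hmem : ∀ n, inSg r s (N n))
    (hsurj : ∀ m, inSg r s m → ∃ n, N n = m) (x : ℕ) :
    ∃ c : ℕ, (∀ ℓ, N ℓ ≤ x ↔ ℓ < c) ∧ Set.ncard {ℓ : ℕ | N ℓ ≤ x} = c ∧
      ((Finset.range (x+1)).filter (fun m => inSg r s m)).card = c := by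
  have hex : ∃ ℓ, x < N ℓ := ⟨x+1, lt_of_lt_of_le (Nat.lt_succ_self x) hmono.le_apply⟩
  set c := Nat.find hex with hc
  have hchar : ∀ ℓ, N ℓ ≤ x ↔ ℓ < c := by
    intro ℓ
    constructor
    · intro h
      by_contra hlt
      push_neg at hlt
      have hspec : x < N c := Nat.find_spec hex
      have hle : N c ≤ N ℓ := hmono.monotone hlt
      omega
    · intro h
      have := Nat.find_min hex h
      omega
  refine ⟨c, hchar, ?_, ?_⟩
  · have : {ℓ : ℕ | N ℓ ≤ x} = ↑(Finset.Iio c) := by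
      ext ℓ; simp [hchar ℓ]
    rw [this, Set.ncard_coe_finset, Nat.card_Iio]
  · have himg : (Finset.range (x+1)).filter (fun m => inSg r s m)
        = (Finset.Iio c).image N := by
      ext m
      simp only [Finset.mem_filter, Finset.mem_range, Finset.mem_image, Finset.mem_Iio]
      constructor
      · rintro ⟨hmx, hmS⟩
        obtain ⟨ℓ, hℓ⟩ := hsurj m hmS
        exact ⟨ℓ, (hchar ℓ).mp (by omega), hℓ⟩
      · rintro ⟨ℓ, hℓ, rfl⟩
        exact ⟨by have := (hchar ℓ).mpr hℓ; omega, hmem ℓ⟩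
    rw [himg, Finset.card_image_of_injective _ hmono.injective, Nat.card_Iio]

/-- The rank of the truncated partition `Λ^{[k]} = (Λ_{k+1}, …, Λ_g)` equals
`n_k`: `n_k` is the largest `ρ` with `Λ_{k+ρ} ≥ ρ` (parts beyond the `g`-th
being zero). -/
theorem rank_of_truncated_partition (r s g : ℕ) (N : ℕ → ℕ)
    (hr : 2 ≤ r) (hrs : r < s) (hco : Nat.Coprime r s)
    (hg : 2 * g = (r - 1) * (s - 1))
    (hmono : StrictMono N)
    (hmem : ∀ n, inSg r s (N n))
    (hsurj : ∀ m, inSg r s m → ∃ n, N n = m)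
    (k : ℕ) (hk : k < g) :
    (1 ≤ nkDef g k N ∧ k + nkDef g k N ≤ g ∧
      nkDef g k N ≤ Lam g N (k + nkDef g k N)) ∧
    (∀ ρ : ℕ, 1 ≤ ρ → k + ρ ≤ g → ρ ≤ Lam g N (k + ρ) → ρ ≤ nkDef g k N) := by
  have hg1 : 1 ≤ g := by
    have h2 : 1 * 2 ≤ (r - 1) * (s - 1) := Nat.mul_le_mul (by omega) (by omega)
    omega
  obtain ⟨c1, hchar1, hn1, hf1⟩ := enum_char r s N hmono hmem hsurj (g-k-1)
  obtain ⟨c2, hchar2, hn2, hf2⟩ := enum_char r s N hmono hmem hsurj (g+k-1)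
  obtain ⟨cg, hcharg, hng, hfg⟩ := enum_char r s N hmono hmem hsurj (2*g-1)
  have hnk : nkDef g k N = c1 := hn1
  -- N 0 = 0
  have hN0 : N 0 = 0 := by
    obtain ⟨n0, hn0⟩ := hsurj 0 ⟨0, 0, by simp⟩
    have := hmono.monotone (Nat.zero_le n0)
    omega
  have hc1pos : 1 ≤ c1 := by
    have := (hchar1 0).mp (by omega)
    omega
  -- split the count up to g+k-1
  have hr1 : g + k - 1 + 1 = g + k := by omega
  have hr2 : g - k - 1 + 1 = g - k := by omega
  have hr3 : 2*g - 1 + 1 = 2*g := by omega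
  rw [hr1] at hf2
  rw [hr2] at hf1
  rw [hr3] at hfg
  have hIco : ((Finset.Ico (g-k) (g+k)).filter (fun m => inSg r s m)).card = k :=
    count_Ico r s g hr hrs hco hg k (by omega)
  have hunion : Finset.range (g+k) = Finset.range (g-k) ∪ Finset.Ico (g-k) (g+k) := by
    rw [Finset.range_eq_Ico, Finset.range_eq_Ico]
    exact (Finset.Ico_union_Ico_eq_Ico (a := 0) (b := g-k) (c := g+k) (by omega) (by omega)).symm
  have hdisj : Disjoint ((Finset.range (g-k)).filter (fun m => inSg r s m))
      ((Finset.Ico (g-k) (g+k)).filter (fun m => inSg r s m)) := by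
    apply Finset.disjoint_filter_filter
    rw [Finset.range_eq_Ico]
    exact Finset.Ico_disjoint_Ico_consecutive 0 (g-k) (g+k)
  have hc2 : c2 = c1 + k := by
    have hadd : ((Finset.range (g+k)).filter (fun m => inSg r s m)).card
        = ((Finset.range (g-k)).filter (fun m => inSg r s m)).card
          + ((Finset.Ico (g-k) (g+k)).filter (fun m => inSg r s m)).card := by
      rw [hunion, Finset.filter_union, Finset.card_union_of_disjoint hdisj]
    omega
  -- count up to 2g-1 equals g
  have hIcog : ((Finset.Ico (g-g) (g+g)).filter (fun m => inSg r s m)).card = g :=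
    count_Ico r s g hr hrs hco hg g le_rfl
  have hcg : cg = g := by
    have heq : Finset.Ico (g-g) (g+g) = Finset.range (2*g) := by
      ext m
      simp only [Finset.mem_Ico, Finset.mem_range]
      omega
    rw [heq] at hIcog
    omega
  -- N g ≥ 2g
  have hNg : 2*g ≤ N g := by
    have := hcharg g
    omega
  -- c2 ≤ g
  have hc2le : c2 ≤ g := by
    by_contra h
    push_neg at h
    have := (hchar2 g).mpr h
    omega
  rw [hnk]
  constructor
  · refine ⟨hc1pos, by omega, ?_⟩
    have hlt : k + c1 - 1 < c2 := by omega
    have hle : N (k + c1 - 1) ≤ g + k - 1 := (hchar2 _).mpr hlt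
    show c1 ≤ g + (k + c1 - 1) - N (k + c1 - 1)
    omega
  · intro ρ hρ1 hρg hρΛ
    have hΛ : ρ ≤ g + (k + ρ - 1) - N (k + ρ - 1) := hρΛ
    have hle : N (k + ρ - 1) ≤ g + k - 1 := by omega
    have := (hchar2 _).mp hle
    omega
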